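/- The mean curvature of the fiber π⁻¹({s}) ⊆ Ȟⁿ (s > 0) of the submersion π(x) = xₙ/x₁ with respect to the unit normal ξ = -∇π/‖∇π‖ equals h(s) = (n-1) s/√(1+s²). In particular, the fibers are hypersurfaces of constant mean curvature. -/

import Mathlib

set_option maxHeartbeats 1000000

theorem stmt13 (n : ℕ) (hn : 2 ≤ n) (s : ℝ) (hs : 0 < s)
    (x : EuclideanSpace ℝ (Fin n)) (hx1 : 0 < x ⟨0, by omega⟩)
    (hfib : x ⟨n-1, by omega⟩ = s * x ⟨0, by omega⟩) :
    let i1 : Fin n := ⟨0, by omega⟩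
    let iN : Fin n := ⟨n-1, by omega⟩
    let γf : EuclideanSpace ℝ (Fin n) → ℝ := fun y => -Real.log (y i1)
    -- the hyperbolic Levi-Civita connection via the conformal change formula
    let cov : (EuclideanSpace ℝ (Fin n) → EuclideanSpace ℝ (Fin n)) →
        (EuclideanSpace ℝ (Fin n) → EuclideanSpace ℝ (Fin n)) →
        EuclideanSpace ℝ (Fin n) → EuclideanSpace ℝ (Fin n) :=
      fun X Y p => fderiv ℝ Y p (X p) + (fderiv ℝ γf p (X p)) • Y p
        + (fderiv ℝ γf p (Y p)) • X p
        + ((p i1)⁻¹ * (inner ℝ (X p) (Y p) : ℝ)) • EuclideanSpace.single i1 (1:ℝ)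
    -- the hyperbolic metric g = x₁⁻² ⟨·,·⟩
    let gmet : EuclideanSpace ℝ (Fin n) → EuclideanSpace ℝ (Fin n) →
        EuclideanSpace ℝ (Fin n) → ℝ :=
      fun p u v => ((p i1)^2)⁻¹ * (inner ℝ u v : ℝ)
    let πf : EuclideanSpace ℝ (Fin n) → ℝ := fun y => y iN / y i1
    -- ξ = -∇π/‖∇π‖, where ∇π = x₁² · (Euclidean gradient of π) and ‖∇π‖ = √(1+s²)
    let ξ : EuclideanSpace ℝ (Fin n) :=
      -((Real.sqrt (1+s^2))⁻¹ • ((x i1)^2 • gradient πf x))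
    let T : EuclideanSpace ℝ (Fin n) → EuclideanSpace ℝ (Fin n) :=
      fun y => (y i1 / Real.sqrt (1+s^2)) •
        (EuclideanSpace.single i1 (1:ℝ) + s • EuclideanSpace.single iN (1:ℝ))
    -- mean curvature of the fiber: h = Σⱼ g(∇_{eⱼ}eⱼ, ξ) + g(∇_T T, ξ)
    (∑ j ∈ Finset.univ.filter (fun j : Fin n => j ≠ i1 ∧ j ≠ iN),
        gmet x (cov (fun y => (y i1) • EuclideanSpace.single j (1:ℝ))
                    (fun y => (y i1) • EuclideanSpace.single j (1:ℝ)) x) ξ)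
      + gmet x (cov T T x) ξ
      = ((n:ℝ) - 1) * s / Real.sqrt (1+s^2) := by
  intro i1 iN γf cov gmet πf ξ T
  have hi : i1 ≠ iN := by
    simp only [i1, iN, ne_eq, Fin.mk.injEq]
    omega
  have hx1' : x i1 ≠ 0 := ne_of_gt hx1
  have hc0 : (0:ℝ) < 1 + s^2 := by positivity
  have hc : 0 < Real.sqrt (1+s^2) := Real.sqrt_pos.mpr hc0
  have hcne : Real.sqrt (1+s^2) ≠ 0 := ne_of_gt hc
  have hmul : Real.sqrt (1+s^2) * Real.sqrt (1+s^2) = 1 + s^2 := Real.mul_self_sqrt hc0.le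
  -- the derivative of the conformal factor
  have hγ : HasFDerivAt γf (-((x i1)⁻¹ • (PiLp.proj (𝕜 := ℝ) 2 (fun _ : Fin n => ℝ) i1))) x :=
    by
      have h1 := PiLp.hasFDerivAt_apply (𝕜 := ℝ) 2 x i1
      have h2 := (Real.hasDerivAt_log hx1').comp_hasFDerivAt x h1
      exact h2.neg
  have hγfd : ∀ v : EuclideanSpace ℝ (Fin n), fderiv ℝ γf x v = -((x i1)⁻¹ * v i1) := by
    intro v
    rw [hγ.fderiv]
    simp only [ContinuousLinearMap.neg_apply, ContinuousLinearMap.coe_smul', Pi.smul_apply,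
      PiLp.proj_apply, smul_eq_mul]
  -- the gradient of πf
  have hgrad : gradient πf x
      = ((x i1)⁻¹) • EuclideanSpace.single iN (1:ℝ)
        - ((x iN) * ((x i1)^2)⁻¹) • EuclideanSpace.single i1 (1:ℝ) := by
    apply HasGradientAt.gradient
    rw [hasGradientAt_iff_hasFDerivAt]
    have hπ : HasFDerivAt πf
        ((x iN) • ((-((x i1)^2)⁻¹) • (PiLp.proj (𝕜 := ℝ) 2 (fun _ : Fin n => ℝ) i1))
          + ((x i1)⁻¹) • (PiLp.proj (𝕜 := ℝ) 2 (fun _ : Fin n => ℝ) iN)) x := by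
      have hinv : HasFDerivAt (fun y : EuclideanSpace ℝ (Fin n) => (y i1)⁻¹)
          ((-((x i1)^2)⁻¹) • (PiLp.proj (𝕜 := ℝ) 2 (fun _ : Fin n => ℝ) i1)) x :=
        (hasDerivAt_inv hx1').comp_hasFDerivAt x (PiLp.hasFDerivAt_apply (𝕜 := ℝ) 2 x i1)
      have := (PiLp.hasFDerivAt_apply (𝕜 := ℝ) 2 x iN).mul hinv
      exact this
    refine hπ.congr_fderiv ?_
    ext v
    simp only [InnerProductSpace.toDual_apply_apply, inner_sub_left, real_inner_smul_left,
      EuclideanSpace.inner_single_left, conj_trivial, one_mul,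
      ContinuousLinearMap.add_apply, ContinuousLinearMap.coe_smul', Pi.smul_apply,
      PiLp.proj_apply, smul_eq_mul]
    ring
  -- the inner product with ξ
  have hξv : ∀ u : EuclideanSpace ℝ (Fin n), (inner ℝ u ξ : ℝ)
      = (Real.sqrt (1+s^2))⁻¹ * (x i1) * (s * u i1 - u iN) := by
    intro u
    simp only [ξ, hgrad, hfib, inner_neg_right, real_inner_smul_right, inner_sub_right,
      EuclideanSpace.inner_single_right, conj_trivial, mul_one]
    field_simp
    rw [show x iN = s * x i1 from hfib]
    ring
  -- each coordinate field term
  have hterm : ∀ j ∈ Finset.univ.filter (fun j : Fin n => j ≠ i1 ∧ j ≠ iN),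
      gmet x (cov (fun y => (y i1) • EuclideanSpace.single j (1:ℝ))
                  (fun y => (y i1) • EuclideanSpace.single j (1:ℝ)) x) ξ
        = s / Real.sqrt (1+s^2) := by
    intro j hj
    simp only [Finset.mem_filter, Finset.mem_univ, true_and] at hj
    obtain ⟨hj1, hjN⟩ := hj
    have hj1' : i1 ≠ j := fun h => hj1 h.symm
    have hjN' : iN ≠ j := fun h => hjN h.symm
    have hE : fderiv ℝ (fun y : EuclideanSpace ℝ (Fin n) => (y i1) • EuclideanSpace.single j (1:ℝ)) x
        = (PiLp.proj (𝕜 := ℝ) 2 (fun _ : Fin n => ℝ) i1).smulRight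
            (EuclideanSpace.single j (1:ℝ)) := by
      have heq : (fun y : EuclideanSpace ℝ (Fin n) => (y i1) • EuclideanSpace.single j (1:ℝ))
          = ⇑((PiLp.proj (𝕜 := ℝ) 2 (fun _ : Fin n => ℝ) i1).smulRight
              (EuclideanSpace.single j (1:ℝ))) := by
        funext y
        simp only [ContinuousLinearMap.smulRight_apply, PiLp.proj_apply]
      rw [heq, ContinuousLinearMap.fderiv]
    have hu1 : (cov (fun y => (y i1) • EuclideanSpace.single j (1:ℝ))
                    (fun y => (y i1) • EuclideanSpace.single j (1:ℝ)) x) i1 = x i1 := by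
      simp only [cov, hE, hγfd]
      simp [EuclideanSpace.single_apply, real_inner_smul_left, real_inner_smul_right,
        EuclideanSpace.inner_single_left, hj1', hi, if_neg, -real_inner_self_eq_norm_sq]
      field_simp
      rw [norm_smul, EuclideanSpace.norm_single, norm_one, mul_one, Real.norm_eq_abs, sq_abs]
    have huN : (cov (fun y => (y i1) • EuclideanSpace.single j (1:ℝ))
                    (fun y => (y i1) • EuclideanSpace.single j (1:ℝ)) x) iN = 0 := by
      simp only [cov, hE, hγfd]
      simp [EuclideanSpace.single_apply, real_inner_smul_left, real_inner_smul_right,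
        EuclideanSpace.inner_single_left, hj1', hjN', hi, hi.symm, if_neg]
    simp only [gmet]
    rw [hξv, hu1, huN]
    field_simp
    ring
  -- cardinality of the index set
  have hcard : (Finset.univ.filter (fun j : Fin n => j ≠ i1 ∧ j ≠ iN)).card = n - 2 := by
    have h1 : (Finset.univ.filter (fun j : Fin n => j ≠ i1 ∧ j ≠ iN))
        = Finset.univ \ {i1, iN} := by
      ext j
      simp [not_or]
    rw [h1, Finset.card_sdiff_of_subset (by simp)]
    rw [Finset.card_insert_of_notMem (by simpa using hi), Finset.card_singleton]
    simp
  rw [Finset.sum_congr rfl hterm, Finset.sum_const, hcard]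
  -- the T term
  have hT : fderiv ℝ T x
      = (PiLp.proj (𝕜 := ℝ) 2 (fun _ : Fin n => ℝ) i1).smulRight
          ((Real.sqrt (1+s^2))⁻¹ • (EuclideanSpace.single i1 (1:ℝ)
            + s • EuclideanSpace.single iN (1:ℝ))) := by
    have heq : T = ⇑((PiLp.proj (𝕜 := ℝ) 2 (fun _ : Fin n => ℝ) i1).smulRight
        ((Real.sqrt (1+s^2))⁻¹ • (EuclideanSpace.single i1 (1:ℝ)
          + s • EuclideanSpace.single iN (1:ℝ)))) := by
      funext y
      simp only [T, ContinuousLinearMap.smulRight_apply, PiLp.proj_apply, smul_smul,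
        div_eq_mul_inv]
    rw [heq, ContinuousLinearMap.fderiv]
  have hv1 : (cov T T x) i1 = x i1 * s^2 / (1+s^2) := by
    simp only [cov, hT, hγfd, T]
    simp [EuclideanSpace.single_apply, real_inner_smul_left, real_inner_smul_right,
      inner_add_left, inner_add_right, EuclideanSpace.inner_single_left, hi,
      hi.symm, if_neg, -real_inner_self_eq_norm_sq]
    field_simp
    have hnT : ‖(x i1 / Real.sqrt (1+s^2)) • EuclideanSpace.single i1 (1:ℝ)
        + (x i1 / Real.sqrt (1+s^2)) • s • EuclideanSpace.single iN (1:ℝ)‖ ^ 2 = x i1 ^ 2 := by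
      rw [norm_add_sq_real, norm_smul, norm_smul, norm_smul, EuclideanSpace.norm_single,
        EuclideanSpace.norm_single, real_inner_smul_left, real_inner_smul_right,
        real_inner_smul_right, EuclideanSpace.inner_single_left, PiLp.single_apply, if_neg hi]
      simp only [norm_one, mul_one, mul_zero, Real.norm_eq_abs, mul_pow, div_pow, sq_abs,
        Real.sq_sqrt hc0.le]
      field_simp
      ring
    rw [hnT, Real.sq_sqrt hc0.le]
    ring
  have hvN : (cov T T x) iN = -(x i1 * s / (1+s^2)) := by
    simp only [cov, hT, hγfd, T]
    simp [EuclideanSpace.single_apply, real_inner_smul_left, real_inner_smul_right,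
      inner_add_left, inner_add_right, EuclideanSpace.inner_single_left, hi,
      hi.symm, if_neg, -real_inner_self_eq_norm_sq]
    field_simp
    rw [Real.sq_sqrt hc0.le]
    ring
  have hTterm : gmet x (cov T T x) ξ = s / Real.sqrt (1+s^2) := by
    simp only [gmet]
    rw [hξv, hv1, hvN]
    field_simp
    ring
  rw [hTterm]
  have hn2 : ((n - 2 : ℕ) : ℝ) = (n : ℝ) - 2 := by
    rw [Nat.cast_sub hn]
    norm_num
  rw [nsmul_eq_mul, hn2]
  field_simp
  ring
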